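/- Let σ̂² > 0, P > 0, Γ = P/σ̂², Q(x) = N(x;P), Ŵ(y|x) = N(y−x;σ̂²), and for s > 0 let i_s(x,y) = log( Ŵ(y|x)^s / ∫ Q(x') Ŵ(y|x')^s dx' ). Then ∬_{ℝ²} Q(x) Ŵ(y|x) i_s(x,y) dx dy = (1/2) log(1 + sΓ) + Γ(1−s) / ( 2 ( s^{−1} + Γ ) ), and ∫_ℝ Q(x) [ ∫ Ŵ(y|x) i_s(x,y)² dy − ( ∫ Ŵ(y|x) i_s(x,y) dy )² ] dx = Γ ( 2 + s²Γ ) / ( 2 ( s^{−1} + Γ )² ). -/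

import Mathlib

open Real Filter MeasureTheory

/-- Centered Gaussian density with variance `v`: `N(z; v)`. -/
noncomputable def gauss (z v : ℝ) : ℝ :=
  (Real.sqrt (2 * Real.pi * v))⁻¹ * Real.exp (-(z ^ 2) / (2 * v))

/-- Mismatched information density for Gaussian input `N(x;P)` and
nearest-neighbor metric `N(y−x;σ̂²)`. -/
noncomputable def iGauss (σ2 P s x y : ℝ) : ℝ :=
  Real.log (gauss (y - x) σ2 ^ s / ∫ x', gauss x' P * gauss (y - x') σ2 ^ s)

lemma gauss_eq (z v : ℝ) :
    gauss z v = (Real.sqrt (2 * π * v))⁻¹ * Real.exp (-(1 / (2 * v)) * z ^ 2) := by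
  unfold gauss; congr 2; ring

lemma gauss_pos {v : ℝ} (hv : 0 < v) (z : ℝ) : 0 < gauss z v := by
  unfold gauss
  have : 0 < Real.sqrt (2 * π * v) := Real.sqrt_pos.2 (by positivity)
  positivity

lemma integrable_pow_gauss {v : ℝ} (hv : 0 < v) (n : ℕ) :
    Integrable (fun z : ℝ => z ^ n * gauss z v) := by
  have hb : 0 < 1 / (2 * v) := by positivity
  have h := integrable_rpow_mul_exp_neg_mul_sq hb (show (-1:ℝ) < n by
    exact lt_of_lt_of_le (by norm_num) (Nat.cast_nonneg n))
  have h2 := h.const_mul ((Real.sqrt (2 * π * v))⁻¹)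
  refine h2.congr (Filter.Eventually.of_forall fun z => ?_)
  simp only [gauss_eq, Real.rpow_natCast]; ring

lemma integral_pow_mul_exp_Ioi {c : ℝ} (hc : 0 < c) (n : ℕ) :
    ∫ x in Set.Ioi (0:ℝ), x ^ n * Real.exp (-c * x ^ 2)
      = (1/2) * ((1/c) ^ (((n:ℝ)+1)/2) * Real.Gamma (((n:ℝ)+1)/2)) := by
  have ha : (0:ℝ) < ((n:ℝ)+1)/2 := by positivity
  have hrg := Real.integral_rpow_mul_exp_neg_mul_Ioi ha hc
  -- ∫ t in Ioi 0, t ^ (((n:ℝ)+1)/2 - 1) * exp (-(c * t)) = (1 / c) ^ (((n:ℝ)+1)/2) * Gamma _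
  rw [← hrg]
  have := MeasureTheory.integral_comp_rpow_Ioi_of_pos
    (g := fun t : ℝ => t ^ (((n:ℝ)+1)/2 - 1) * Real.exp (-(c * t))) (p := 2) zero_lt_two
  rw [← this, ← integral_const_mul]
  refine setIntegral_congr_fun measurableSet_Ioi fun x hx => ?_
  have hx' : (0:ℝ) < x := hx
  have hx2 : (x:ℝ) ^ (2:ℝ) = x ^ (2:ℕ) := by rw [← Real.rpow_natCast]; norm_num
  simp only [smul_eq_mul, hx2]
  rw [← Real.rpow_natCast x 2, ← Real.rpow_mul hx'.le]
  rw [show ((2:ℕ):ℝ) * ((((n:ℝ)+1)/2) - 1) = (n:ℝ) - 1 by push_cast; ring]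
  rw [show (2:ℝ) * x ^ ((2:ℝ)-1) = 2 * x by norm_num]
  rw [show x ^ ((n:ℝ) - 1) = x ^ (n:ℝ) * x⁻¹ by
    rw [Real.rpow_sub hx', Real.rpow_one]; ring]
  rw [Real.rpow_natCast, Real.rpow_natCast]
  field_simp


lemma integral_pow_mul_exp_even {c : ℝ} (hc : 0 < c) (n : ℕ) (hn : Even n) :
    ∫ x : ℝ, x ^ n * Real.exp (-c * x ^ 2)
      = (1/c) ^ (((n:ℝ)+1)/2) * Real.Gamma (((n:ℝ)+1)/2) := by
  have habs : ∀ x : ℝ, |x| ^ n * Real.exp (-c * |x| ^ 2) = x ^ n * Real.exp (-c * x ^ 2) := by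
    intro x; rw [hn.pow_abs, sq_abs]
  calc ∫ x : ℝ, x ^ n * Real.exp (-c * x ^ 2)
      = ∫ x : ℝ, |x| ^ n * Real.exp (-c * |x| ^ 2) := by
        congr 1; funext x; rw [habs]
    _ = 2 * ∫ x in Set.Ioi (0:ℝ), x ^ n * Real.exp (-c * x ^ 2) :=
        integral_comp_abs (f := fun x => x ^ n * Real.exp (-c * x ^ 2))
    _ = (1/c) ^ (((n:ℝ)+1)/2) * Real.Gamma (((n:ℝ)+1)/2) := by
        rw [integral_pow_mul_exp_Ioi hc]; ring

lemma rpow_half_eq_sqrt {x : ℝ} (hx : 0 ≤ x) : x ^ ((1:ℝ)/2) = Real.sqrt x := by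
  rw [Real.sqrt_eq_rpow]

lemma Gamma_three_half : Real.Gamma ((3:ℝ)/2) = Real.sqrt π / 2 := by
  have : ((3:ℝ)/2) = 1/2 + 1 := by norm_num
  rw [this, Real.Gamma_add_one (by norm_num), Real.Gamma_one_half_eq]; ring

lemma Gamma_five_half : Real.Gamma ((5:ℝ)/2) = 3 * Real.sqrt π / 4 := by
  have : ((5:ℝ)/2) = 3/2 + 1 := by norm_num
  rw [this, Real.Gamma_add_one (by norm_num), Gamma_three_half]; ring

lemma sqrt_two_pi_v {v : ℝ} (hv : 0 < v) :
    Real.sqrt (2 * π * v) = Real.sqrt (2 * v) * Real.sqrt π := by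
  rw [show 2*π*v = (2*v)*π by ring, Real.sqrt_mul (by positivity)]

lemma integral_gauss_pow (n : ℕ) {v : ℝ} (hv : 0 < v) (hn : Even n) :
    ∫ z : ℝ, z ^ n * gauss z v
      = (Real.sqrt (2*v) * Real.sqrt π)⁻¹ *
        ((2*v) ^ (((n:ℝ)+1)/2) * Real.Gamma (((n:ℝ)+1)/2)) := by
  have hc : 0 < 1 / (2 * v) := by positivity
  calc ∫ z : ℝ, z ^ n * gauss z v
      = ∫ z : ℝ, (Real.sqrt (2 * π * v))⁻¹ * (z ^ n * Real.exp (-(1/(2*v)) * z ^ 2)) := by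
        congr 1; funext z; rw [gauss_eq]; ring
    _ = (Real.sqrt (2 * π * v))⁻¹ * ∫ z : ℝ, z ^ n * Real.exp (-(1/(2*v)) * z ^ 2) :=
        integral_const_mul _ _
    _ = _ := by
        rw [integral_pow_mul_exp_even hc n hn, sqrt_two_pi_v hv,
          one_div_one_div]

lemma integral_gauss {v : ℝ} (hv : 0 < v) : ∫ z : ℝ, gauss z v = 1 := by
  have h := integral_gauss_pow 0 hv (Even.zero)
  simp only [pow_zero, one_mul] at h
  rw [h]
  rw [show (((0:ℕ):ℝ)+1)/2 = 1/2 by norm_num, Real.Gamma_one_half_eq,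
    rpow_half_eq_sqrt (by positivity)]
  have h1 : 0 < Real.sqrt (2*v) := Real.sqrt_pos.2 (by positivity)
  have h2 : 0 < Real.sqrt π := Real.sqrt_pos.2 Real.pi_pos
  field_simp

lemma integral_sq_gauss {v : ℝ} (hv : 0 < v) : ∫ z : ℝ, z ^ 2 * gauss z v = v := by
  rw [integral_gauss_pow 2 hv (by norm_num)]
  rw [show (((2:ℕ):ℝ)+1)/2 = 1 + 1/2 by norm_num, Real.rpow_add (by positivity),
    Real.rpow_one, rpow_half_eq_sqrt (by positivity),
    show (1:ℝ) + 1/2 = 3/2 by norm_num, Gamma_three_half]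
  have h1 : 0 < Real.sqrt (2*v) := Real.sqrt_pos.2 (by positivity)
  have h2 : 0 < Real.sqrt π := Real.sqrt_pos.2 Real.pi_pos
  field_simp

lemma integral_quartic_gauss' {v : ℝ} (hv : 0 < v) : ∫ z : ℝ, z ^ 4 * gauss z v = 3 * v ^ 2 := by
  rw [integral_gauss_pow 4 hv (by decide)]
  rw [show (((4:ℕ):ℝ)+1)/2 = 2 + 1/2 by norm_num, Real.rpow_add (by positivity),
    rpow_half_eq_sqrt (by positivity),
    show ((2:ℝ) + 1/2) = 5/2 by norm_num, Gamma_five_half,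
    show ((2*v) ^ (2:ℝ)) = (2*v) ^ (2:ℕ) by rw [← Real.rpow_natCast]; norm_num]
  have h1 : 0 < Real.sqrt (2*v) := Real.sqrt_pos.2 (by positivity)
  have h2 : 0 < Real.sqrt π := Real.sqrt_pos.2 Real.pi_pos
  field_simp
  ring

lemma integral_odd_gauss {v : ℝ} {n : ℕ} (hn : Odd n) : ∫ z : ℝ, z ^ n * gauss z v = 0 := by
  have key : ∀ z : ℝ, (-z) ^ n * gauss (-z) v = -(z ^ n * gauss z v) := by
    intro z
    have : gauss (-z) v = gauss z v := by unfold gauss; rw [neg_pow]; simp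
    rw [this, hn.neg_pow]; ring
  have h := MeasureTheory.integral_neg_eq_self (fun z : ℝ => z ^ n * gauss z v) volume
  simp only [key] at h
  rw [integral_neg] at h
  linarith

lemma integral_quad_gauss {v : ℝ} (hv : 0 < v) (A B C : ℝ) :
    ∫ z : ℝ, (A * z ^ 2 + B * z + C) * gauss z v = A * v + C := by
  have h2 := integrable_pow_gauss hv 2
  have h1 := integrable_pow_gauss hv 1
  have h0 := integrable_pow_gauss hv 0
  have e : (fun z : ℝ => (A * z ^ 2 + B * z + C) * gauss z v)
      = fun z : ℝ => A * (z ^ 2 * gauss z v) + (B * (z ^ 1 * gauss z v) + C * (z ^ 0 * gauss z v)) := by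
    funext z; ring
  have hBC : Integrable (fun z : ℝ => B * (z ^ 1 * gauss z v) + C * (z ^ 0 * gauss z v)) volume :=
    (h1.const_mul B).add (h0.const_mul C)
  rw [e, integral_add (h2.const_mul A) hBC]
  rw [integral_add (h1.const_mul B) (h0.const_mul C),
    integral_const_mul, integral_const_mul, integral_const_mul,
    integral_sq_gauss hv, integral_odd_gauss odd_one]
  have : ∫ z : ℝ, z ^ 0 * gauss z v = 1 := by
    simp only [pow_zero, one_mul]; exact integral_gauss hv
  rw [this]; ring

lemma integral_quartic_gauss {v : ℝ} (hv : 0 < v) (A B C D E : ℝ) :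
    ∫ z : ℝ, (A * z ^ 4 + B * z ^ 3 + C * z ^ 2 + D * z + E) * gauss z v
      = 3 * A * v ^ 2 + C * v + E := by
  have h4 := integrable_pow_gauss hv 4
  have h3 := integrable_pow_gauss hv 3
  have h2 := integrable_pow_gauss hv 2
  have h1 := integrable_pow_gauss hv 1
  have h0 := integrable_pow_gauss hv 0
  have e : (fun z : ℝ => (A * z ^ 4 + B * z ^ 3 + C * z ^ 2 + D * z + E) * gauss z v)
      = fun z : ℝ => A * (z ^ 4 * gauss z v) + (B * (z ^ 3 * gauss z v)
          + (C * (z ^ 2 * gauss z v) + (D * (z ^ 1 * gauss z v) + E * (z ^ 0 * gauss z v)))) := by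
    funext z; ring
  have hDE : Integrable (fun z : ℝ => D * (z ^ 1 * gauss z v) + E * (z ^ 0 * gauss z v)) volume :=
    (h1.const_mul D).add (h0.const_mul E)
  have hCDE : Integrable (fun z : ℝ => C * (z ^ 2 * gauss z v)
      + (D * (z ^ 1 * gauss z v) + E * (z ^ 0 * gauss z v))) volume :=
    (h2.const_mul C).add hDE
  have hBCDE : Integrable (fun z : ℝ => B * (z ^ 3 * gauss z v) + (C * (z ^ 2 * gauss z v)
      + (D * (z ^ 1 * gauss z v) + E * (z ^ 0 * gauss z v)))) volume :=
    (h3.const_mul B).add hCDE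
  rw [e, integral_add (h4.const_mul A) hBCDE]
  rw [integral_add (h3.const_mul B) hCDE]
  rw [integral_add (h2.const_mul C) hDE]
  rw [integral_add (h1.const_mul D) (h0.const_mul E),
    integral_const_mul, integral_const_mul, integral_const_mul, integral_const_mul, integral_const_mul,
    integral_quartic_gauss' hv, integral_sq_gauss hv,
    integral_odd_gauss (by decide : Odd 3), integral_odd_gauss odd_one]
  have : ∫ z : ℝ, z ^ 0 * gauss z v = 1 := by
    simp only [pow_zero, one_mul]; exact integral_gauss hv
  rw [this]; ring

lemma gauss_conv {p a : ℝ} (hp : 0 < p) (ha : 0 < a) (y : ℝ) :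
    ∫ x : ℝ, gauss x p * gauss (y - x) a = gauss y (p + a) := by
  have hpa : 0 < p + a := by positivity
  have hv : 0 < p * a / (p + a) := by positivity
  have pointwise : ∀ x : ℝ, gauss x p * gauss (y - x) a
      = gauss y (p + a) * gauss (x - p * y / (p + a)) (p * a / (p + a)) := by
    intro x
    unfold gauss
    rw [mul_mul_mul_comm, ← Real.exp_add, mul_mul_mul_comm, ← Real.exp_add]
    congr 1
    · rw [← mul_inv, ← mul_inv, ← Real.sqrt_mul (by positivity), ← Real.sqrt_mul (by positivity)]
      congr 1
      field_simp
    · congr 1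
      field_simp
      ring
  calc ∫ x : ℝ, gauss x p * gauss (y - x) a
      = ∫ x : ℝ, gauss y (p + a) * gauss (x - p * y / (p + a)) (p * a / (p + a)) := by
        congr 1; funext x; exact pointwise x
    _ = gauss y (p + a) * ∫ x : ℝ, gauss (x - p * y / (p + a)) (p * a / (p + a)) :=
        integral_const_mul _ _
    _ = gauss y (p + a) := by
        rw [integral_sub_right_eq_self (fun x => gauss x (p * a / (p + a))) (p * y / (p + a)),
          integral_gauss hv, mul_one]

lemma gauss_rpow {v s : ℝ} (hv : 0 < v) (hs : 0 < s) (z : ℝ) :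
    gauss z v ^ s = ((Real.sqrt (2 * π * v))⁻¹ ^ s * Real.sqrt (2 * π * (v / s)))
      * gauss z (v / s) := by
  have h1 : 0 < Real.sqrt (2 * π * v) := Real.sqrt_pos.2 (by positivity)
  have h2 : 0 < Real.sqrt (2 * π * (v / s)) := Real.sqrt_pos.2 (by positivity)
  unfold gauss
  rw [Real.mul_rpow (by positivity) (Real.exp_pos _).le, ← Real.exp_mul]
  rw [show -(z ^ 2) / (2 * v) * s = -(z ^ 2) / (2 * (v / s)) by field_simp]
  field_simp

lemma iGauss_eq {σ2 P s : ℝ} (hσ : 0 < σ2) (hP : 0 < P) (hs : 0 < s) (x y : ℝ) :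
    iGauss σ2 P s x y = (1/2) * Real.log (1 + s * (P / σ2))
      - s * (y - x) ^ 2 / (2 * σ2) + y ^ 2 / (2 * (P + σ2 / s)) := by
  have ha : 0 < σ2 / s := by positivity
  have hb : 0 < P + σ2 / s := by positivity
  have h1 : 0 < Real.sqrt (2 * π * σ2) := Real.sqrt_pos.2 (by positivity)
  have hKpos : 0 < (Real.sqrt (2 * π * σ2))⁻¹ ^ s * Real.sqrt (2 * π * (σ2 / s)) := by
    have h2 : 0 < Real.sqrt (2 * π * (σ2 / s)) := Real.sqrt_pos.2 (by positivity)
    positivity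
  have hden : (∫ x' : ℝ, gauss x' P * gauss (y - x') σ2 ^ s)
      = ((Real.sqrt (2 * π * σ2))⁻¹ ^ s * Real.sqrt (2 * π * (σ2 / s)))
        * gauss y (P + σ2 / s) := by
    calc (∫ x' : ℝ, gauss x' P * gauss (y - x') σ2 ^ s)
        = ∫ x' : ℝ, ((Real.sqrt (2 * π * σ2))⁻¹ ^ s * Real.sqrt (2 * π * (σ2 / s)))
            * (gauss x' P * gauss (y - x') (σ2 / s)) := by
          congr 1; funext x'; rw [gauss_rpow hσ hs]; ring
      _ = ((Real.sqrt (2 * π * σ2))⁻¹ ^ s * Real.sqrt (2 * π * (σ2 / s)))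
            * ∫ x' : ℝ, gauss x' P * gauss (y - x') (σ2 / s) := integral_const_mul _ _
      _ = _ := by rw [gauss_conv hP ha]
  unfold iGauss
  rw [hden, gauss_rpow hσ hs, mul_div_mul_left _ _ hKpos.ne']
  rw [Real.log_div (gauss_pos ha _).ne' (gauss_pos hb _).ne']
  unfold gauss
  rw [Real.log_mul (by positivity) (Real.exp_pos _).ne',
    Real.log_mul (by positivity) (Real.exp_pos _).ne',
    Real.log_exp, Real.log_exp, Real.log_inv, Real.log_inv,
    Real.log_sqrt (by positivity), Real.log_sqrt (by positivity)]
  have hlog : Real.log (2 * π * (P + σ2 / s)) - Real.log (2 * π * (σ2 / s))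
      = Real.log (1 + s * (P / σ2)) := by
    rw [← Real.log_div (by positivity) (by positivity)]
    congr 1
    field_simp
    ring
  rw [← hlog]
  field_simp
  ring

set_option maxHeartbeats 1000000 in
/-- Closed forms of `I^ML_s` and `V_s` for Gaussian codebooks with
nearest-neighbor decoding, where `Γ = P/σ̂²`. -/
theorem stmt16 (σ2 P s : ℝ) (hσ : 0 < σ2) (hP : 0 < P) (hs : 0 < s) :
    (∫ x, ∫ y, gauss x P * gauss (y - x) σ2 * iGauss σ2 P s x y)
        = (1 / 2) * Real.log (1 + s * (P / σ2))
          + (P / σ2) * (1 - s) / (2 * (s⁻¹ + P / σ2)) ∧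
    (∫ x, gauss x P * ((∫ y, gauss (y - x) σ2 * (iGauss σ2 P s x y) ^ 2)
        - (∫ y, gauss (y - x) σ2 * iGauss σ2 P s x y) ^ 2))
        = (P / σ2) * (2 + s ^ 2 * (P / σ2)) / (2 * (s⁻¹ + P / σ2) ^ 2) := by
  have hb : 0 < P + σ2 / s := by positivity
  have hbne : P + σ2 / s ≠ 0 := hb.ne'
  have hsne : s ≠ 0 := hs.ne'
  have hσne : σ2 ≠ 0 := hσ.ne'
  have hg : 0 < s⁻¹ + P / σ2 := by positivity
  have hgne : s⁻¹ + P / σ2 ≠ 0 := hg.ne'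
  have key1 : ∀ x : ℝ, (∫ y, gauss (y - x) σ2 * iGauss σ2 P s x y)
      = (1/(2*(P + σ2/s)) - s/(2*σ2)) * σ2
        + ((1/2) * Real.log (1 + s * (P / σ2)) + x^2/(2*(P + σ2/s))) := by
    intro x
    rw [← integral_add_right_eq_self (μ := volume)
      (fun y => gauss (y - x) σ2 * iGauss σ2 P s x y) x]
    simp only [add_sub_cancel_right]
    have e : (fun z : ℝ => gauss z σ2 * iGauss σ2 P s x (z + x))
        = fun z : ℝ => ((1/(2*(P + σ2/s)) - s/(2*σ2)) * z^2 + (x/(P + σ2/s)) * z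
            + ((1/2) * Real.log (1 + s * (P / σ2)) + x^2/(2*(P + σ2/s)))) * gauss z σ2 := by
      funext z
      rw [iGauss_eq hσ hP hs]
      simp only [add_sub_cancel_right]
      field_simp
      ring
    rw [e, integral_quad_gauss hσ]
  have key2 : ∀ x : ℝ, (∫ y, gauss (y - x) σ2 * (iGauss σ2 P s x y) ^ 2)
      = 3 * ((1/(2*(P + σ2/s)) - s/(2*σ2))^2) * σ2^2
        + ((x/(P + σ2/s))^2 + 2 * (1/(2*(P + σ2/s)) - s/(2*σ2))
            * ((1/2) * Real.log (1 + s * (P / σ2)) + x^2/(2*(P + σ2/s)))) * σ2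
        + ((1/2) * Real.log (1 + s * (P / σ2)) + x^2/(2*(P + σ2/s)))^2 := by
    intro x
    rw [← integral_add_right_eq_self (μ := volume)
      (fun y => gauss (y - x) σ2 * (iGauss σ2 P s x y) ^ 2) x]
    simp only [add_sub_cancel_right]
    have e : (fun z : ℝ => gauss z σ2 * (iGauss σ2 P s x (z + x)) ^ 2)
        = fun z : ℝ => (((1/(2*(P + σ2/s)) - s/(2*σ2))^2) * z^4
            + (2 * (1/(2*(P + σ2/s)) - s/(2*σ2)) * (x/(P + σ2/s))) * z^3
            + ((x/(P + σ2/s))^2 + 2 * (1/(2*(P + σ2/s)) - s/(2*σ2))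
                * ((1/2) * Real.log (1 + s * (P / σ2)) + x^2/(2*(P + σ2/s)))) * z^2
            + (2 * (x/(P + σ2/s))
                * ((1/2) * Real.log (1 + s * (P / σ2)) + x^2/(2*(P + σ2/s)))) * z
            + ((1/2) * Real.log (1 + s * (P / σ2)) + x^2/(2*(P + σ2/s)))^2) * gauss z σ2 := by
      funext z
      rw [iGauss_eq hσ hP hs]
      simp only [add_sub_cancel_right]
      field_simp
      ring
    rw [e, integral_quartic_gauss hσ]
  constructor
  · calc (∫ x, ∫ y, gauss x P * gauss (y - x) σ2 * iGauss σ2 P s x y)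
        = ∫ x : ℝ, ((1/(2*(P + σ2/s))) * x^2 + 0 * x
            + ((1/(2*(P + σ2/s)) - s/(2*σ2)) * σ2
              + (1/2) * Real.log (1 + s * (P / σ2)))) * gauss x P := by
          congr 1; funext x
          rw [show (fun y => gauss x P * gauss (y - x) σ2 * iGauss σ2 P s x y)
              = fun y => gauss x P * (gauss (y - x) σ2 * iGauss σ2 P s x y) from
            funext fun y => by ring]
          rw [integral_const_mul, key1 x]
          ring
      _ = (1/(2*(P + σ2/s))) * P + ((1/(2*(P + σ2/s)) - s/(2*σ2)) * σ2
              + (1/2) * Real.log (1 + s * (P / σ2))) := integral_quad_gauss hP _ _ _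
      _ = (1 / 2) * Real.log (1 + s * (P / σ2))
          + (P / σ2) * (1 - s) / (2 * (s⁻¹ + P / σ2)) := by
          field_simp
          ring
  · calc (∫ x, gauss x P * ((∫ y, gauss (y - x) σ2 * (iGauss σ2 P s x y) ^ 2)
        - (∫ y, gauss (y - x) σ2 * iGauss σ2 P s x y) ^ 2))
        = ∫ x : ℝ, ((σ2/(P + σ2/s)^2) * x^2 + 0 * x
            + 2 * ((1/(2*(P + σ2/s)) - s/(2*σ2))^2) * σ2^2) * gauss x P := by
          congr 1; funext x
          rw [key2 x, key1 x, mul_comm]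
          congr 1
          field_simp
          ring
      _ = (σ2/(P + σ2/s)^2) * P + 2 * ((1/(2*(P + σ2/s)) - s/(2*σ2))^2) * σ2^2 :=
          integral_quad_gauss hP _ _ _
      _ = (P / σ2) * (2 + s ^ 2 * (P / σ2)) / (2 * (s⁻¹ + P / σ2) ^ 2) := by
          field_simp
          ring
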